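/- Let A and B be n×n real symmetric matrices and let 0 < r ≤ 2. Then Σ_{k=1}^n |λ_k(A+B)|^r ≤ 8 ( Σ_{k=1}^n |λ_k(A)|^r + Σ_{k=1}^n |λ_k(B)|^r ); equivalently, ∫_ℝ |t|^r dμ_{A+B}(t) ≤ 8 ( ∫_ℝ |t|^r dμ_A(t) + ∫_ℝ |t|^r dμ_B(t) ), where μ_M denotes the empirical spectral measure of M. -/

import Mathlib

open scoped ENNReal

section Aux

open Finset Module

private noncomputable def kerOn {n : ℕ} (w : (Fin n → ℝ) →ₗ[ℝ] (Fin n → ℝ))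
    (s : Finset (Fin n)) : Submodule ℝ (Fin n → ℝ) :=
  LinearMap.ker ((LinearMap.funLeft ℝ ℝ (fun i : s => (i : Fin n))).comp w)

private lemma mem_kerOn {n : ℕ} {w : (Fin n → ℝ) →ₗ[ℝ] (Fin n → ℝ)}
    {s : Finset (Fin n)} {v : Fin n → ℝ} :
    v ∈ kerOn w s ↔ ∀ i ∈ s, w v i = 0 := by
  simp only [kerOn, LinearMap.mem_ker, LinearMap.comp_apply, LinearMap.funLeft_apply]
  constructor
  · intro h i hi
    exact congrFun h ⟨i, hi⟩
  · intro h
    funext i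
    exact h i i.2

private lemma finrank_kerOn {n : ℕ} (w : (Fin n → ℝ) →ₗ[ℝ] (Fin n → ℝ))
    (s : Finset (Fin n)) : n - s.card ≤ finrank ℝ (kerOn w s) := by
  rw [kerOn]
  have h := LinearMap.finrank_range_add_finrank_ker
    ((LinearMap.funLeft ℝ ℝ (fun i : s => (i : Fin n))).comp w)
  have h2 : finrank ℝ (Fin n → ℝ) = n := by simp [Module.finrank_pi]
  have h3 : finrank ℝ (LinearMap.range ((LinearMap.funLeft ℝ ℝ (fun i : s => (i : Fin n))).comp w))
      ≤ s.card := by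
    refine le_trans (Submodule.finrank_le _) ?_
    simp [Module.finrank_pi]
  rw [h2] at h
  omega

open Classical in
private lemma core_count {n : ℕ} (wA wB wC : (Fin n → ℝ) →ₗ[ℝ] (Fin n → ℝ))
    (μA μB μC : Fin n → ℝ)
    (hnA : ∀ v : Fin n → ℝ, ∑ i, (wA v i)^2 = ∑ i, (v i)^2)
    (hnB : ∀ v : Fin n → ℝ, ∑ i, (wB v i)^2 = ∑ i, (v i)^2)
    (hnC : ∀ v : Fin n → ℝ, ∑ i, (wC v i)^2 = ∑ i, (v i)^2)
    (hq : ∀ v : Fin n → ℝ,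
      ∑ i, μC i * (wC v i)^2 = ∑ i, μA i * (wA v i)^2 + ∑ i, μB i * (wB v i)^2)
    (t : ℝ) :
    (univ.filter fun i => t < μC i).card ≤
      (univ.filter fun i => t/2 < μA i).card + (univ.filter fun i => t/2 < μB i).card := by
  by_contra hcon
  push_neg at hcon
  set PA := univ.filter fun i => t/2 < μA i with hPA
  set PB := univ.filter fun i => t/2 < μB i with hPB
  set SC := univ.filter fun i : Fin n => ¬ t < μC i with hSC
  have hcard : (univ.filter fun i => t < μC i).card + SC.card = n := by
    rw [hSC, Finset.card_filter_add_card_filter_not]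
    simp
  -- the three subspaces
  set V := kerOn wC SC
  set WA := kerOn wA PA
  set WB := kerOn wB PB
  have hV : n - SC.card ≤ finrank ℝ V := finrank_kerOn _ _
  have hWA : n - PA.card ≤ finrank ℝ WA := finrank_kerOn _ _
  have hWB : n - PB.card ≤ finrank ℝ WB := finrank_kerOn _ _
  -- dimension of intersection
  have hfin : finrank ℝ (Fin n → ℝ) = n := by simp [Module.finrank_pi]
  have h1 := Submodule.finrank_sup_add_finrank_inf_eq V WA
  have h2 := Submodule.finrank_sup_add_finrank_inf_eq (V ⊓ WA) WB
  have h3 := (Submodule.finrank_le (V ⊔ WA)).trans_eq hfin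
  have h4 := (Submodule.finrank_le ((V ⊓ WA) ⊔ WB)).trans_eq hfin
  have hpos : 0 < finrank ℝ (V ⊓ WA ⊓ WB : Submodule ℝ (Fin n → ℝ)) := by omega
  obtain ⟨v, hv, hv0⟩ : ∃ v, v ∈ V ⊓ WA ⊓ WB ∧ v ≠ 0 := by
    obtain ⟨⟨v, hv⟩, hv0⟩ := Module.finrank_pos_iff_exists_ne_zero.mp hpos
    exact ⟨v, hv, fun h => hv0 (Subtype.ext h)⟩
  obtain ⟨⟨hvV, hvA⟩, hvB⟩ := hv
  have hC0 : ∀ i, ¬ t < μC i → wC v i = 0 := fun i hi =>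
    mem_kerOn.mp hvV i (by simp only [hSC, mem_filter, mem_univ, true_and]; exact hi)
  have hA0 : ∀ i, t/2 < μA i → wA v i = 0 := fun i hi =>
    mem_kerOn.mp hvA i (by simp [hPA, hi])
  have hB0 : ∀ i, t/2 < μB i → wB v i = 0 := fun i hi =>
    mem_kerOn.mp hvB i (by simp [hPB, hi])
  -- c > 0
  obtain ⟨j0, hj0⟩ : ∃ j, v j ≠ 0 := by
    by_contra h
    push_neg at h
    exact hv0 (funext h)
  set c := ∑ i, (v i)^2 with hc
  have hcpos : 0 < c := by
    have : (0:ℝ) < (v j0)^2 := by positivity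
    refine this.trans_le ?_
    exact Finset.single_le_sum (fun i _ => sq_nonneg (v i)) (mem_univ j0)
  -- bound qA
  have hqA : ∑ i, μA i * (wA v i)^2 ≤ t/2 * c := by
    rw [hc, ← hnA v, Finset.mul_sum]
    refine Finset.sum_le_sum fun i _ => ?_
    by_cases hi : t/2 < μA i
    · simp [hA0 i hi]
    · exact mul_le_mul_of_nonneg_right (not_lt.mp hi) (sq_nonneg _)
  have hqB : ∑ i, μB i * (wB v i)^2 ≤ t/2 * c := by
    rw [hc, ← hnB v, Finset.mul_sum]
    refine Finset.sum_le_sum fun i _ => ?_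
    by_cases hi : t/2 < μB i
    · simp [hB0 i hi]
    · exact mul_le_mul_of_nonneg_right (not_lt.mp hi) (sq_nonneg _)
  -- strict lower bound for qC
  obtain ⟨j, hj⟩ : ∃ j, wC v j ≠ 0 := by
    by_contra h
    push_neg at h
    have : c = 0 := by rw [hc, ← hnC v]; simp [h]
    exact hcpos.ne' this
  have hμj : t < μC j := by
    by_contra h
    exact hj (hC0 j h)
  have hqC : t * c < ∑ i, μC i * (wC v i)^2 := by
    rw [hc, ← hnC v, Finset.mul_sum]
    refine Finset.sum_lt_sum (fun i _ => ?_) ⟨j, mem_univ j, ?_⟩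
    · by_cases hi : t < μC i
      · exact mul_le_mul_of_nonneg_right hi.le (sq_nonneg _)
      · simp [hC0 i hi]
    · have : (0:ℝ) < (wC v j)^2 := by positivity
      exact mul_lt_mul_of_pos_right hμj this
  have := hq v
  linarith

open Finset Matrix in
private lemma matrix_spectral_data {n : ℕ} {M : Matrix (Fin n) (Fin n) ℝ}
    (hM : M.IsHermitian) :
    ∃ w : (Fin n → ℝ) →ₗ[ℝ] (Fin n → ℝ),
      (∀ v : Fin n → ℝ, ∑ i, (w v i)^2 = ∑ i, (v i)^2) ∧
      (∀ v : Fin n → ℝ, v ⬝ᵥ (M *ᵥ v) = ∑ i, hM.eigenvalues i * (w v i)^2) := by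
  have dot_sq : ∀ x : Fin n → ℝ, x ⬝ᵥ x = ∑ i, x i ^ 2 := by
    intro x; simp [dotProduct, sq]
  set U : Matrix (Fin n) (Fin n) ℝ := ↑hM.eigenvectorUnitary with hU
  have h1 : U * star U = 1 := Matrix.mem_unitaryGroup_iff.mp hM.eigenvectorUnitary.2
  have hsU : star U = Uᵀ := by
    rw [Matrix.star_eq_conjTranspose, Matrix.conjTranspose_eq_transpose_of_trivial]
  refine ⟨Matrix.mulVecLin (star U), fun v => ?_, fun v => ?_⟩
  · have norm1 : (star U *ᵥ v) ⬝ᵥ (star U *ᵥ v) = v ⬝ᵥ v := by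
      rw [hsU, mulVec_transpose, ← dotProduct_mulVec, ← mulVec_transpose, mulVec_mulVec,
        ← hsU, h1, one_mulVec]
    simpa [Matrix.mulVecLin_apply, ← dot_sq] using norm1
  · have quad1 : v ⬝ᵥ (M *ᵥ v) = ∑ i, hM.eigenvalues i * ((star U *ᵥ v) i)^2 := by
      conv_lhs => rw [hM.spectral_theorem, Unitary.conjStarAlgAut_apply]
      rw [← mulVec_mulVec, ← mulVec_mulVec, dotProduct_mulVec (A := U), ← hU,
        ← mulVec_transpose, ← hsU]
      simp only [mulVec_diagonal, dotProduct]
      refine Finset.sum_congr rfl fun i _ => ?_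
      simp only [Function.comp_apply, RCLike.ofReal_real_eq_id, id_eq]
      ring
    simpa [Matrix.mulVecLin_apply] using quad1

open Finset Matrix Classical in
private lemma count_abs_eigenvalues {n : ℕ} (A B : Matrix (Fin n) (Fin n) ℝ)
    (hA : A.IsHermitian) (hB : B.IsHermitian) (hAB : (A + B).IsHermitian)
    {t : ℝ} (ht : 0 ≤ t) :
    (univ.filter fun i => t < |hAB.eigenvalues i|).card ≤
      (univ.filter fun i => t/2 < |hA.eigenvalues i|).card +
      (univ.filter fun i => t/2 < |hB.eigenvalues i|).card := by
  obtain ⟨wA, hnA, hqA⟩ := matrix_spectral_data hA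
  obtain ⟨wB, hnB, hqB⟩ := matrix_spectral_data hB
  obtain ⟨wC, hnC, hqC⟩ := matrix_spectral_data hAB
  have hq : ∀ v : Fin n → ℝ, ∑ i, hAB.eigenvalues i * (wC v i)^2 =
      ∑ i, hA.eigenvalues i * (wA v i)^2 + ∑ i, hB.eigenvalues i * (wB v i)^2 := by
    intro v
    rw [← hqA v, ← hqB v, ← hqC v, Matrix.add_mulVec, dotProduct_add]
  have hpos := core_count wA wB wC hA.eigenvalues hB.eigenvalues hAB.eigenvalues
    hnA hnB hnC hq t
  have hneg := core_count wA wB wC (-hA.eigenvalues) (-hB.eigenvalues) (-hAB.eigenvalues)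
    hnA hnB hnC (fun v => by have := hq v; simp only [Pi.neg_apply, neg_mul,
      Finset.sum_neg_distrib]; linarith) t
  simp only [Pi.neg_apply] at hneg
  -- split absolute values
  have split : ∀ (μ : Fin n → ℝ),
      (univ.filter fun i => t/2 < |μ i|).card =
        (univ.filter fun i => t/2 < μ i).card + (univ.filter fun i => t/2 < -μ i).card := by
    intro μ
    have hu : (univ.filter fun i => t/2 < |μ i|) =
        (univ.filter fun i => t/2 < μ i) ∪ (univ.filter fun i => t/2 < -μ i) := by
      rw [← Finset.filter_or]
      refine Finset.filter_congr fun i _ => ?_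
      simp [lt_abs]
    rw [hu, Finset.card_union_of_disjoint]
    rw [Finset.disjoint_filter]
    intro i _ h1 h2
    linarith
  have splitC : (univ.filter fun i => t < |hAB.eigenvalues i|).card ≤
      (univ.filter fun i => t < hAB.eigenvalues i).card +
        (univ.filter fun i => t < -hAB.eigenvalues i).card := by
    have hsub : (univ.filter fun i => t < |hAB.eigenvalues i|) ⊆
        (univ.filter fun i => t < hAB.eigenvalues i) ∪
          (univ.filter fun i => t < -hAB.eigenvalues i) := by
      intro i hi
      simp only [Finset.mem_filter, Finset.mem_univ, true_and, Finset.mem_union] at *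
      rwa [lt_abs] at hi
    exact le_trans (Finset.card_le_card hsub) (Finset.card_union_le _ _)
  rw [split hA.eigenvalues, split hB.eigenvalues]
  omega

open MeasureTheory Set Finset Classical in
private lemma sum_rpow_le_of_count {n : ℕ} (f gA gB : Fin n → ℝ)
    (hf : ∀ k, 0 ≤ f k) (hgA : ∀ k, 0 ≤ gA k) (hgB : ∀ k, 0 ≤ gB k)
    (hcount : ∀ t : ℝ, 0 < t →
      (Finset.univ.filter fun k => t < f k).card ≤
        (Finset.univ.filter fun k => t < gA k).card +
        (Finset.univ.filter fun k => t < gB k).card)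
    {r : ℝ} (hr : 0 < r) :
    ∑ k, (f k) ^ r ≤ (∑ k, (gA k) ^ r) + ∑ k, (gB k) ^ r := by
  have hcnt : ∀ (h : Fin n → ℝ) (t : ℝ), Measure.count {a | t < h a} =
      ((Finset.univ.filter fun k => t < h k).card : ℝ≥0∞) := by
    intro h t
    rw [Measure.count_apply_finite _ (Set.toFinite _)]
    congr 2
    rw [Set.toFinite_toFinset, Set.toFinset_setOf]
  set w : ℝ → ℝ≥0∞ := fun t => ENNReal.ofReal (t ^ (r - 1)) with hw
  have hwm : Measurable w := by fun_prop
  have hmono : ∀ h : Fin n → ℝ, Measurable fun t : ℝ => Measure.count {a | t < h a} := by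
    intro h
    refine Antitone.measurable fun s t hst => ?_
    exact measure_mono fun a ha => lt_of_le_of_lt hst ha
  have layer : ∀ h : Fin n → ℝ, (∀ k, 0 ≤ h k) →
      ∑ k, ENNReal.ofReal (h k ^ r) =
        ENNReal.ofReal r * ∫⁻ t in Ioi 0, Measure.count {a | t < h a} * w t := by
    intro h hh
    rw [← tsum_fintype (L := SummationFilter.unconditional (Fin n)), ← lintegral_count]
    exact lintegral_rpow_eq_lintegral_meas_lt_mul Measure.count (ae_of_all _ hh)
      (measurable_of_countable h).aemeasurable hr
  have key : ∑ k, ENNReal.ofReal (f k ^ r) ≤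
      (∑ k, ENNReal.ofReal (gA k ^ r)) + ∑ k, ENNReal.ofReal (gB k ^ r) := by
    rw [layer f hf, layer gA hgA, layer gB hgB, ← mul_add, ← lintegral_add_left (f := fun t => Measure.count {a | t < gA a} * w t)
      ((hmono gA).mul hwm)]
    refine mul_le_mul_right (lintegral_mono_ae ?_) _
    filter_upwards [self_mem_ae_restrict measurableSet_Ioi] with t ht
    rw [← add_mul]
    refine mul_le_mul_left ?_ _
    rw [hcnt f t, hcnt gA t, hcnt gB t, ← Nat.cast_add, Nat.cast_le]
    exact hcount t ht
  rw [← ENNReal.ofReal_sum_of_nonneg (fun k _ => Real.rpow_nonneg (hf k) r),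
    ← ENNReal.ofReal_sum_of_nonneg (fun k _ => Real.rpow_nonneg (hgA k) r),
    ← ENNReal.ofReal_sum_of_nonneg (fun k _ => Real.rpow_nonneg (hgB k) r),
    ← ENNReal.ofReal_add (Finset.sum_nonneg fun k _ => Real.rpow_nonneg (hgA k) r)
      (Finset.sum_nonneg fun k _ => Real.rpow_nonneg (hgB k) r)] at key
  rw [ENNReal.ofReal_le_ofReal_iff] at key
  · exact key
  · exact add_nonneg (Finset.sum_nonneg fun k _ => Real.rpow_nonneg (hgA k) r)
      (Finset.sum_nonneg fun k _ => Real.rpow_nonneg (hgB k) r)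

end Aux


/-- **Schatten-type quasi-norm inequality for sums of symmetric matrices** (used in the proof of
Lemma `lemma:tightness` of the paper): for real symmetric `n × n` matrices `A` and `B` and
`0 < r ≤ 2`, `∑_k |λ_k(A+B)|^r ≤ 8 (∑_k |λ_k(A)|^r + ∑_k |λ_k(B)|^r)`. -/
theorem sum_abs_rpow_eigenvalues_add_le
    {n : ℕ} (A B : Matrix (Fin n) (Fin n) ℝ)
    (hA : A.IsHermitian) (hB : B.IsHermitian) (hAB : (A + B).IsHermitian)
    (r : ℝ) (hr0 : 0 < r) (hr2 : r ≤ 2) :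
    ∑ k, |hAB.eigenvalues k| ^ r ≤
      8 * ((∑ k, |hA.eigenvalues k| ^ r) + ∑ k, |hB.eigenvalues k| ^ r) := by
  classical
  have hcount : ∀ t : ℝ, 0 < t →
      (Finset.univ.filter fun k => t < |hAB.eigenvalues k|).card ≤
        (Finset.univ.filter fun k => t < 2 * |hA.eigenvalues k|).card +
        (Finset.univ.filter fun k => t < 2 * |hB.eigenvalues k|).card := by
    intro t ht
    have h := count_abs_eigenvalues A B hA hB hAB (t := t) ht.le
    have e1 : (Finset.univ.filter fun k => t < 2 * |hA.eigenvalues k|) =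
        (Finset.univ.filter fun k => t/2 < |hA.eigenvalues k|) := by
      refine Finset.filter_congr fun k _ => ?_
      constructor <;> intro h' <;> linarith
    have e2 : (Finset.univ.filter fun k => t < 2 * |hB.eigenvalues k|) =
        (Finset.univ.filter fun k => t/2 < |hB.eigenvalues k|) := by
      refine Finset.filter_congr fun k _ => ?_
      constructor <;> intro h' <;> linarith
    rw [e1, e2]
    exact h
  have key := sum_rpow_le_of_count (fun k => |hAB.eigenvalues k|)
    (fun k => 2 * |hA.eigenvalues k|) (fun k => 2 * |hB.eigenvalues k|)
    (fun k => abs_nonneg _) (fun k => by positivity) (fun k => by positivity)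
    hcount hr0
  have hmul : ∀ μ : Fin n → ℝ, ∑ k, (2 * |μ k|) ^ r = 2 ^ r * ∑ k, |μ k| ^ r := by
    intro μ
    rw [Finset.mul_sum]
    refine Finset.sum_congr rfl fun k _ => ?_
    rw [Real.mul_rpow (by norm_num) (abs_nonneg _)]
  rw [hmul, hmul] at key
  have h2r : (2:ℝ) ^ r ≤ 4 := by
    calc (2:ℝ) ^ r ≤ 2 ^ (2:ℝ) := Real.rpow_le_rpow_of_exponent_le one_le_two hr2
    _ = 4 := by
      rw [show (2:ℝ) = ((2:ℕ):ℝ) by norm_num, Real.rpow_natCast]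
      norm_num
  have hX : (0:ℝ) ≤ ∑ k, |hA.eigenvalues k| ^ r :=
    Finset.sum_nonneg fun k _ => Real.rpow_nonneg (abs_nonneg _) r
  have hY : (0:ℝ) ≤ ∑ k, |hB.eigenvalues k| ^ r :=
    Finset.sum_nonneg fun k _ => Real.rpow_nonneg (abs_nonneg _) r
  have h1 : (2:ℝ) ^ r * ∑ k, |hA.eigenvalues k| ^ r ≤ 4 * ∑ k, |hA.eigenvalues k| ^ r :=
    mul_le_mul_of_nonneg_right h2r hX
  have h2 : (2:ℝ) ^ r * ∑ k, |hB.eigenvalues k| ^ r ≤ 4 * ∑ k, |hB.eigenvalues k| ^ r :=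
    mul_le_mul_of_nonneg_right h2r hY
  linarith
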